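/- If p/q and p'/q' are two successive elements (in increasing order) of the Farey series of order n (the set of irreducible fractions in [0,1] with denominator at most n), then q·p' − q'·p = 1. -/

import Mathlib

/-- The Farey series of order `n`: rationals in `[0,1]` (automatically in lowest
terms in `ℚ`) with denominator at most `n`. -/
def farey (n : ℕ) : Set ℚ := {x | 0 ≤ x ∧ x ≤ 1 ∧ x.den ≤ n}

/-- If `u < v` then `v - u ≥ 1/(u.den * v.den)`. -/
lemma farey_gap (u v : ℚ) (h : u < v) : 1 / ((u.den : ℚ) * v.den) ≤ v - u := by
  have hud : (0:ℚ) < (u.den : ℚ) := by exact_mod_cast u.pos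
  have hvd : (0:ℚ) < (v.den : ℚ) := by exact_mod_cast v.pos
  have hu : u * (u.den:ℚ) = (u.num:ℚ) := Rat.mul_den_eq_num u
  have hv : v * (v.den:ℚ) = (v.num:ℚ) := Rat.mul_den_eq_num v
  have h' : u.num * v.den < v.num * u.den := by
    have hu' : u = (u.num:ℚ)/(u.den:ℚ) := (Rat.num_div_den u).symm
    have hv' : v = (v.num:ℚ)/(v.den:ℚ) := (Rat.num_div_den v).symm
    rw [hu', hv', div_lt_div_iff₀ hud hvd] at h
    exact_mod_cast h
  have hnum : (1:ℤ) ≤ v.num * u.den - u.num * v.den := by omega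
  have hrw : v - u = ((v.num * u.den - u.num * v.den : ℤ):ℚ) / ((u.den:ℚ)*(v.den:ℚ)) := by
    rw [eq_div_iff (by positivity)]
    push_cast
    linear_combination (u.den:ℚ) * hv - (v.den:ℚ) * hu
  rw [hrw]
  gcongr
  exact_mod_cast hnum

theorem farey_succ_unimodular (n : ℕ) (hn : 1 ≤ n) (x y : ℚ)
    (hx : x ∈ farey n) (hy : y ∈ farey n) (hxy : x < y)
    (hsucc : ∀ z ∈ farey n, ¬(x < z ∧ z < y)) :
    (x.den : ℤ) * y.num - (y.den : ℤ) * x.num = 1 := by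
  obtain ⟨hx0, hx1, hxd⟩ := hx
  obtain ⟨hy0, hy1, hyd⟩ := hy
  set p : ℤ := x.num with hp
  set q : ℤ := (x.den : ℤ) with hq
  have hq0 : 0 < q := by rw [hq]; exact_mod_cast x.pos
  have hqn : q ≤ n := by rw [hq]; exact_mod_cast hxd
  have hp0 : 0 ≤ p := Rat.num_nonneg.mpr hx0
  have hx1' : x < 1 := lt_of_lt_of_le hxy hy1
  have hpq : p < q := by
    have := Rat.num_lt_denom_iff.mpr hx1'
    rw [hp, hq]; exact_mod_cast this
  -- Bezout
  have hcop : IsCoprime p q := by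
    rw [Int.isCoprime_iff_gcd_eq_one]
    exact x.reduced
  obtain ⟨u, v, huv⟩ := hcop
  set b0 : ℤ := -u with hb0
  set a0 : ℤ := v with ha0
  have hbase : q * a0 - p * b0 = 1 := by rw [ha0, hb0]; linear_combination huv
  set k : ℤ := (n - b0) / q with hk
  set s : ℤ := b0 + q * k with hs
  set r : ℤ := a0 + p * k with hr
  have hrs : q * r - p * s = 1 := by rw [hr, hs]; linear_combination hbase
  have hdiv : q * k = (n - b0) - (n - b0) % q := by
    rw [hk]
    have := Int.mul_ediv_add_emod (n - b0) q
    linarith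
  have hmod0 : 0 ≤ (n - b0) % q := Int.emod_nonneg _ hq0.ne'
  have hmodq : (n - b0) % q < q := Int.emod_lt_of_pos _ hq0
  have hsub : s ≤ n := by rw [hs]; omega
  have hslow : (n:ℤ) - q < s := by rw [hs]; omega
  have hs0 : 0 < s := by omega
  have hr0 : 0 < r := by nlinarith
  have hrle : r ≤ s := by nlinarith
  have hcop2 : Nat.Coprime r.natAbs s.natAbs :=
    Int.isCoprime_iff_gcd_eq_one.mp ⟨q, -p, by linear_combination hrs⟩
  set w : ℚ := (r:ℚ)/(s:ℚ) with hw
  have hwnum : w.num = r := Rat.num_div_eq_of_coprime hs0 hcop2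
  have hwden : (w.den : ℤ) = s := Rat.den_div_eq_of_coprime hs0 hcop2
  have hsQ : (0:ℚ) < (s:ℚ) := by exact_mod_cast hs0
  have hqQ : (0:ℚ) < (q:ℚ) := by rw [hq]; exact_mod_cast x.pos
  have hxnd : x = (p:ℚ)/(q:ℚ) := by rw [hp, hq]; exact (Rat.num_div_den x).symm
  have hZ : (r:ℚ)*(q:ℚ) - (p:ℚ)*(s:ℚ) = 1 := by
    have : ((q*r - p*s : ℤ):ℚ) = 1 := by rw [hrs]; norm_num
    push_cast at this
    linarith
  have hxw : x < w := by
    rw [hxnd, hw, div_lt_div_iff₀ hqQ hsQ]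
    nlinarith
  have hwfarey : w ∈ farey n := by
    refine ⟨by positivity, ?_, ?_⟩
    · rw [hw, div_le_one hsQ]; exact_mod_cast hrle
    · have h1 : (w.den : ℤ) ≤ n := by omega
      exact_mod_cast h1
  have hwx : w - x = 1 / ((q:ℚ) * (s:ℚ)) := by
    rw [hw, hxnd, div_sub_div _ _ hsQ.ne' hqQ.ne', mul_comm (s:ℚ) (q:ℚ)]
    congr 1
    linear_combination hZ
  have hclaim : ∀ z ∈ farey n, x < z → w ≤ z := by
    intro z hz hxz
    by_contra hlt
    push_neg at hlt
    have h1 := farey_gap z w hlt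
    have h2 := farey_gap x z hxz
    set B : ℚ := (z.den : ℚ) with hB'
    have hB : (0:ℚ) < B := by rw [hB']; exact_mod_cast z.pos
    have hBn : B ≤ n := by rw [hB']; exact_mod_cast hz.2.2
    have hwdQ : (w.den : ℚ) = (s:ℚ) := by exact_mod_cast hwden
    have hxdQ : (x.den : ℚ) = (q:ℚ) := by rw [hq]; push_cast; ring
    rw [hwdQ] at h1
    rw [hxdQ] at h2
    have hsum : 1/(B*(s:ℚ)) + 1/((q:ℚ)*B) ≤ 1/((q:ℚ)*(s:ℚ)) := by
      calc 1/(B*(s:ℚ)) + 1/((q:ℚ)*B) ≤ (w - z) + (z - x) := add_le_add h1 h2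
        _ = w - x := by ring
        _ = 1/((q:ℚ)*(s:ℚ)) := hwx
    have hqs : (n:ℚ) + 1 ≤ (q:ℚ) + (s:ℚ) := by
      have h3 : (n:ℤ) + 1 ≤ q + s := by omega
      exact_mod_cast h3
    have hQSB : (0:ℚ) < (q:ℚ)*(s:ℚ)*B := by positivity
    have hkey : (q:ℚ) + (s:ℚ) ≤ B := by
      have h3 : ((q:ℚ)+(s:ℚ))/((q:ℚ)*(s:ℚ)*B) ≤ B/((q:ℚ)*(s:ℚ)*B) := by
        calc ((q:ℚ)+(s:ℚ))/((q:ℚ)*(s:ℚ)*B) = 1/(B*(s:ℚ)) + 1/((q:ℚ)*B) := by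
              field_simp
          _ ≤ 1/((q:ℚ)*(s:ℚ)) := hsum
          _ = B/((q:ℚ)*(s:ℚ)*B) := by field_simp
      exact (div_le_div_iff_of_pos_right hQSB).mp h3
    linarith
  have h1 : w ≤ y := hclaim y ⟨hy0, hy1, hyd⟩ hxy
  have h2 : ¬ (x < w ∧ w < y) := hsucc w hwfarey
  have hyw : y = w := by
    rcases lt_or_eq_of_le h1 with h | h
    · exact absurd ⟨hxw, h⟩ h2
    · exact h.symm
  rw [hyw, hwnum, hwden]
  linear_combination hrs
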